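/- Let e_1, e_2 ∈ E and let f be a maximum (s,t)-flow of G with f(e_1) = 0 and f(e_2) = 1. Then the maximum (s,t)-flow value of G − {e_1, e_2} equals λ − 1 if and only if the two endpoints of e_2 are not strongly connected in the graph G_f − e_1; otherwise it equals λ. -/

import Mathlib

open Finset

/-- A finite directed multigraph on vertex type `V` with edge type `E`:
each edge `e` has a source `src e` and a target `tgt e`. -/
structure Digraph' (V E : Type) where
  src : E → V
  tgt : E → V

namespace Digraph'

variable {V E : Type} [Fintype V] [DecidableEq V] [Fintype E] [DecidableEq E]

/-- `h : E → ℕ` satisfies flow conservation at every vertex other than `s` and `t`: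
the sum over incoming edges equals the sum over outgoing edges. -/
def Conserves (G : Digraph' V E) (s t : V) (h : E → ℕ) : Prop :=
  ∀ v : V, v ≠ s → v ≠ t →
    ∑ e ∈ univ.filter (fun e => G.tgt e = v), h e =
      ∑ e ∈ univ.filter (fun e => G.src e = v), h e

/-- The value of `h`: the net flow out of `s`. -/
def flowValue (G : Digraph' V E) (s : V) (h : E → ℕ) : ℤ :=
  (∑ e ∈ univ.filter (fun e => G.src e = s), (h e : ℤ)) -
    ∑ e ∈ univ.filter (fun e => G.tgt e = s), (h e : ℤ)

/-- An `(s,t)`-flow of a unit-capacity digraph: a `{0,1}`-valued function on edges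
satisfying flow conservation at every vertex other than `s` and `t`. -/
def IsFlow (G : Digraph' V E) (s t : V) (f : E → ℕ) : Prop :=
  (∀ e, f e ≤ 1) ∧ G.Conserves s t f

/-- One step along an edge not belonging to `F`. -/
def stepAvoid (G : Digraph' V E) (F : Finset E) (u v : V) : Prop :=
  ∃ e, e ∉ F ∧ G.src e = u ∧ G.tgt e = v

/-- Reachability by a directed path using no edge of `F`. -/
def ReachAvoid (G : Digraph' V E) (F : Finset E) : V → V → Prop :=
  Relation.ReflTransGen (G.stepAvoid F)

/-- `C` is an `(s,t)`-cut: after deleting the edges of `C` there is no directed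
path from `s` to `t`. -/
def IsCut (G : Digraph' V E) (s t : V) (C : Finset E) : Prop :=
  ¬ G.ReachAvoid C s t

/-- An `(s,t)`-min-cut: an `(s,t)`-cut of minimum cardinality. -/
def IsMinCut (G : Digraph' V E) (s t : V) (C : Finset E) : Prop :=
  G.IsCut s t C ∧ ∀ C' : Finset E, G.IsCut s t C' → C.card ≤ C'.card

/-- A minimal `(s,t)`-cut: no proper subset of it is an `(s,t)`-cut. -/
def IsMinimalCut (G : Digraph' V E) (s t : V) (C : Finset E) : Prop :=
  G.IsCut s t C ∧ ∀ C' : Finset E, C' ⊂ C → ¬ G.IsCut s t C'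

/-- An edge is critical if it belongs to some `(s,t)`-min-cut. -/
def Critical (G : Digraph' V E) (s t : V) (e : E) : Prop :=
  ∃ C : Finset E, G.IsMinCut s t C ∧ e ∈ C

/-- `m` is the maximum `(s,t)`-flow value of `G − F`, i.e. the largest value of an
`(s,t)`-flow of `G` vanishing on every edge of `F`. -/
def IsMaxFlowValue (G : Digraph' V E) (s t : V) (F : Finset E) (m : ℤ) : Prop :=
  (∃ f, G.IsFlow s t f ∧ (∀ e ∈ F, f e = 0) ∧ G.flowValue s f = m) ∧
    ∀ f, G.IsFlow s t f → (∀ e ∈ F, f e = 0) → G.flowValue s f ≤ m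

/-- The residual graph `G_f` of a `{0,1}`-flow `f`: each edge with `f e = 1`
is reversed, each edge with `f e = 0` is kept as is. -/
def residual (G : Digraph' V E) (f : E → ℕ) : Digraph' V E where
  src e := if f e = 1 then G.tgt e else G.src e
  tgt e := if f e = 1 then G.src e else G.tgt e

end Digraph'

set_option linter.unusedSectionVars false
set_option maxHeartbeats 1000000

namespace Digraph'

variable {V E : Type} [Fintype V] [DecidableEq V] [Fintype E] [DecidableEq E]

/-- Excess of `h` at `v`: inflow minus outflow. -/
def exc (H : Digraph' V E) (h : E → ℕ) (v : V) : ℤ :=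
  (∑ e ∈ univ.filter (fun e => H.tgt e = v), (h e : ℤ)) -
    ∑ e ∈ univ.filter (fun e => H.src e = v), (h e : ℤ)

lemma exc_eq_sum (H : Digraph' V E) (h : E → ℕ) (v : V) :
    exc H h v = ∑ e : E, ((if H.tgt e = v then (h e : ℤ) else 0) -
      (if H.src e = v then (h e : ℤ) else 0)) := by
  rw [exc, Finset.sum_sub_distrib, Finset.sum_filter, Finset.sum_filter]

lemma flowValue_eq (H : Digraph' V E) (s : V) (h : E → ℕ) :
    H.flowValue s h = - exc H h s := by
  rw [flowValue, exc]; ring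

lemma conserves_iff_exc (H : Digraph' V E) (s t : V) (h : E → ℕ) :
    H.Conserves s t h ↔ ∀ v : V, v ≠ s → v ≠ t → exc H h v = 0 := by
  unfold Conserves exc
  refine forall_congr' fun v => forall_congr' fun _ => forall_congr' fun _ => ?_
  rw [sub_eq_zero]
  push_cast
  exact ⟨fun h => by exact_mod_cast h, fun h => by exact_mod_cast h⟩

lemma sum_exc (H : Digraph' V E) (h : E → ℕ) :
    ∑ v : V, exc H h v = 0 := by
  unfold exc
  rw [Finset.sum_sub_distrib]
  rw [Finset.sum_fiberwise_eq_sum_filter univ univ (fun e => H.tgt e) (fun e => (h e : ℤ))]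
  rw [Finset.sum_fiberwise_eq_sum_filter univ univ (fun e => H.src e) (fun e => (h e : ℤ))]
  simp

lemma exc_t_eq {H : Digraph' V E} {s t : V} {h : E → ℕ} (hc : H.Conserves s t h)
    (hst : s ≠ t) : exc H h t = - exc H h s := by
  have h0 := sum_exc H h
  have : ∑ v : V, exc H h v = ∑ v ∈ ({s, t} : Finset V), exc H h v := by
    symm
    apply Finset.sum_subset (Finset.subset_univ _)
    intro v _ hv
    simp only [Finset.mem_insert, Finset.mem_singleton, not_or] at hv
    exact (conserves_iff_exc H s t h).mp hc v hv.1 hv.2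
  rw [this, Finset.sum_pair hst] at h0
  linarith


/-- Step along an edge in the support of `h`. -/
def hstep (H : Digraph' V E) (h : E → ℕ) (u v : V) : Prop :=
  ∃ e, h e ≠ 0 ∧ H.src e = u ∧ H.tgt e = v

lemma key (H : Digraph' V E) (h : E → ℕ) (x : V) :
    ∃ R : Finset V, x ∈ R ∧
      (∀ v ∈ R, Relation.ReflTransGen (hstep H h) x v) ∧
      ∑ v ∈ R, exc H h v =
        ∑ e ∈ univ.filter (fun e => H.tgt e ∈ R ∧ H.src e ∉ R), (h e : ℤ) := by
  classical
  refine ⟨univ.filter (fun v => Relation.ReflTransGen (hstep H h) x v),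
    Finset.mem_filter.mpr ⟨Finset.mem_univ x, Relation.ReflTransGen.refl⟩, ?_, ?_⟩
  · intro v hv; simpa using hv
  · set R := univ.filter (fun v => Relation.ReflTransGen (hstep H h) x v) with hR
    have hclosed : ∀ e, h e ≠ 0 → H.src e ∈ R → H.tgt e ∈ R := by
      intro e he hs
      simp only [hR, Finset.mem_filter, Finset.mem_univ, true_and] at hs ⊢
      exact hs.tail ⟨e, he, rfl, rfl⟩
    have h1 : ∑ v ∈ R, exc H h v =
        (∑ e ∈ univ.filter (fun e => H.tgt e ∈ R), (h e : ℤ)) -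
          ∑ e ∈ univ.filter (fun e => H.src e ∈ R), (h e : ℤ) := by
      unfold exc
      rw [Finset.sum_sub_distrib]
      rw [Finset.sum_fiberwise_eq_sum_filter univ R (fun e => H.tgt e) (fun e => (h e : ℤ))]
      rw [Finset.sum_fiberwise_eq_sum_filter univ R (fun e => H.src e) (fun e => (h e : ℤ))]
    have h2 : (∑ e ∈ univ.filter (fun e => H.tgt e ∈ R), (h e : ℤ)) =
        (∑ e ∈ univ.filter (fun e => H.tgt e ∈ R ∧ H.src e ∈ R), (h e : ℤ)) +
          ∑ e ∈ univ.filter (fun e => H.tgt e ∈ R ∧ H.src e ∉ R), (h e : ℤ) := by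
      rw [← Finset.sum_filter_add_sum_filter_not (univ.filter (fun e => H.tgt e ∈ R))
        (fun e => H.src e ∈ R)]
      rw [Finset.filter_filter, Finset.filter_filter]
    have h3 : (∑ e ∈ univ.filter (fun e => H.src e ∈ R), (h e : ℤ)) =
        ∑ e ∈ univ.filter (fun e => H.tgt e ∈ R ∧ H.src e ∈ R), (h e : ℤ) := by
      rw [← Finset.sum_filter_add_sum_filter_not (univ.filter (fun e => H.src e ∈ R))
        (fun e => H.tgt e ∈ R)]
      rw [Finset.filter_filter, Finset.filter_filter]
      have hz : ∑ e ∈ univ.filter (fun e => H.src e ∈ R ∧ ¬ H.tgt e ∈ R), (h e : ℤ) = 0 := by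
        apply Finset.sum_eq_zero
        intro e he
        simp only [Finset.mem_filter, Finset.mem_univ, true_and] at he
        by_contra hne
        exact he.2 (hclosed e (by exact_mod_cast fun h0 => hne (by simp [h0])) he.1)
      rw [hz, add_zero]
      apply Finset.sum_congr _ (fun _ _ => rfl)
      apply Finset.filter_congr
      intro e _
      simp [and_comm]
    rw [h1, h2, h3]; ring

/-- A walk in `H` from `a` to `b` along the list of edges `L`. -/
def Walk (H : Digraph' V E) : V → V → List E → Prop
  | a, b, [] => a = b
  | a, b, e :: L => H.src e = a ∧ Walk H (H.tgt e) b L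

lemma walk_congr {H H' : Digraph' V E} : ∀ {L : List E} {a b : V},
    (∀ e ∈ L, H.src e = H'.src e ∧ H.tgt e = H'.tgt e) → Walk H a b L → Walk H' a b L
  | [], a, b, _, hW => hW
  | e :: L, a, b, hagree, hW => by
    obtain ⟨hs, hW'⟩ := hW
    refine ⟨(hagree e (by simp)).1 ▸ hs, ?_⟩
    have := walk_congr (fun e' he' => hagree e' (by simp [he'])) hW'
    rwa [← (hagree e (by simp)).2]

lemma walk_append_split {H : Digraph' V E} : ∀ {L M : List E} {a b : V},
    Walk H a b (L ++ M) → ∃ c, Walk H a c L ∧ Walk H c b M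
  | [], M, a, b, hW => ⟨a, rfl, hW⟩
  | e :: L, M, a, b, hW => by
    obtain ⟨hs, hW'⟩ := hW
    obtain ⟨c, h1, h2⟩ := walk_append_split hW'
    exact ⟨c, ⟨hs, h1⟩, h2⟩

lemma exists_walk {H : Digraph' V E} {P : E → Prop} {r : V → V → Prop}
    (hr : ∀ u v, r u v → ∃ e, P e ∧ H.src e = u ∧ H.tgt e = v) {a b : V}
    (h : Relation.ReflTransGen r a b) :
    ∃ L : List E, Walk H a b L ∧ ∀ e ∈ L, P e := by
  induction h using Relation.ReflTransGen.head_induction_on with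
  | refl => exact ⟨[], rfl, by simp⟩
  | head hstep _ ih =>
    obtain ⟨L, hW, hP⟩ := ih
    obtain ⟨e, hPe, hsrc, htgt⟩ := hr _ _ hstep
    exact ⟨e :: L, ⟨hsrc, htgt ▸ hW⟩, by
      intro e' he'; rcases List.mem_cons.mp he' with h | h
      · exact h ▸ hPe
      · exact hP e' h⟩

lemma reflTransGen_of_walk {H : Digraph' V E} {P : E → Prop} {r : V → V → Prop}
    (hr : ∀ e, P e → r (H.src e) (H.tgt e)) :
    ∀ {L : List E} {a b : V}, Walk H a b L → (∀ e ∈ L, P e) →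
      Relation.ReflTransGen r a b
  | [], a, b, hW, _ => hW ▸ Relation.ReflTransGen.refl
  | e :: L, a, b, hW, hP =>
    Relation.ReflTransGen.head (hW.1 ▸ hr e (hP e (by simp)))
      (reflTransGen_of_walk hr hW.2 (fun e' he' => hP e' (by simp [he'])))

lemma exists_trail {H : Digraph' V E} {b : V} : ∀ {L : List E} {a : V}, Walk H a b L →
    ∃ T : List E, T.Nodup ∧ Walk H a b T ∧ ∀ e ∈ T, e ∈ L
  | [], a, hW => ⟨[], List.nodup_nil, hW, by simp⟩
  | e :: L, a, hW => by
    obtain ⟨hs, hW'⟩ := hW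
    obtain ⟨T, hN, hWT, hsub⟩ := exists_trail hW'
    by_cases he : e ∈ T
    · obtain ⟨T₁, T₂, rfl⟩ := List.append_of_mem he
      obtain ⟨c, _, hWc⟩ := walk_append_split hWT
      obtain ⟨hc, hWT₂⟩ := hWc
      refine ⟨e :: T₂, ?_, ⟨hs, hWT₂⟩, ?_⟩
      · simp only [List.nodup_append, List.nodup_cons] at hN
        exact List.nodup_cons.mpr ⟨hN.2.1.1, hN.2.1.2⟩
      · intro e' he'
        rcases List.mem_cons.mp he' with h | h
        · simp [h]
        · exact List.mem_cons_of_mem e (hsub e' (by simp [h]))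
    · exact ⟨e :: T, List.nodup_cons.mpr ⟨he, hN⟩, ⟨hs, hWT⟩, by
        intro e' he'
        rcases List.mem_cons.mp he' with h | h
        · simp [h]
        · exact List.mem_cons_of_mem e (hsub e' h)⟩

lemma trail_split (H : Digraph' V E) {a b : V} {L : List E} (e₀ : E)
    (hN : L.Nodup) (hW : Walk H a b L) :
    (∃ T : List E, T.Nodup ∧ Walk H a b T ∧ e₀ ∉ T ∧ ∀ e ∈ T, e ∈ L) ∨
    (∃ T : List E, T.Nodup ∧ Walk H a (H.src e₀) T ∧ e₀ ∉ T ∧ ∀ e ∈ T, e ∈ L) := by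
  by_cases he : e₀ ∈ L
  · right
    obtain ⟨A, B, rfl⟩ := List.append_of_mem he
    obtain ⟨c, hA, hB⟩ := walk_append_split hW
    simp only [List.nodup_append, List.nodup_cons] at hN
    exact ⟨A, hN.1, hB.1 ▸ hA, fun hmem => hN.2.2 e₀ hmem e₀ (by simp) rfl,
      fun e he' => by simp [he']⟩
  · left; exact ⟨L, hN, hW, he, fun _ h => h⟩

/-- Toggle the flow `f` on each edge of `L`. -/
def tog (f : E → ℕ) (L : List E) : E → ℕ := fun e => if e ∈ L then 1 - f e else f e

lemma tog_of_not_mem {f : E → ℕ} {L : List E} {e : E} (h : e ∉ L) : tog f L e = f e := by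
  simp [tog, h]

lemma tog_of_mem {f : E → ℕ} {L : List E} {e : E} (h : e ∈ L) : tog f L e = 1 - f e := by
  simp [tog, h]

lemma tog_le_one {f : E → ℕ} (hf : ∀ e, f e ≤ 1) (L : List E) (e : E) : tog f L e ≤ 1 := by
  unfold tog; split
  · omega
  · exact hf e

lemma tog_nil (f : E → ℕ) : tog f [] = f := by funext e; simp [tog]

lemma tog_cons {f : E → ℕ} {e : E} {L : List E} (he : e ∉ L) :
    tog f (e :: L) = tog (Function.update f e (1 - f e)) L := by
  funext e'
  by_cases h1 : e' = e
  · subst h1; simp [tog, he]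
  · by_cases h2 : e' ∈ L <;> simp [tog, h1, h2, Function.update_of_ne h1]

variable {G : Digraph' V E}

lemma exc_update (f : E → ℕ) (e : E) (n : ℕ) (v : V) :
    exc G (Function.update f e n) v = exc G f v +
      ((n : ℤ) - f e) * ((if G.tgt e = v then (1 : ℤ) else 0) -
        (if G.src e = v then (1 : ℤ) else 0)) := by
  rw [exc_eq_sum, exc_eq_sum]
  rw [← Finset.add_sum_erase _ _ (Finset.mem_univ e),
    ← Finset.add_sum_erase _ (fun e' => ((if G.tgt e' = v then (f e' : ℤ) else 0) -
      (if G.src e' = v then (f e' : ℤ) else 0))) (Finset.mem_univ e)]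
  have hrest : ∀ e' ∈ Finset.univ.erase e,
      ((if G.tgt e' = v then (Function.update f e n e' : ℤ) else 0) -
        (if G.src e' = v then (Function.update f e n e' : ℤ) else 0)) =
      ((if G.tgt e' = v then (f e' : ℤ) else 0) - (if G.src e' = v then (f e' : ℤ) else 0)) := by
    intro e' he'
    rw [Function.update_of_ne (Finset.ne_of_mem_erase he')]
  rw [Finset.sum_congr rfl hrest, Function.update_self]
  by_cases h1 : G.tgt e = v <;> by_cases h2 : G.src e = v <;> simp [h1, h2] <;> ring

lemma exc_toggle (f : E → ℕ) (e : E) (hf : f e ≤ 1) (v : V) :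
    exc G (Function.update f e (1 - f e)) v = exc G f v +
      ((if (G.residual f).tgt e = v then (1 : ℤ) else 0) -
        (if (G.residual f).src e = v then (1 : ℤ) else 0)) := by
  rw [exc_update]
  rcases Nat.le_one_iff_eq_zero_or_eq_one.mp hf with h | h <;> simp [residual, h] <;> ring

lemma exc_tog {b : V} : ∀ (L : List E) (f : E → ℕ) (a : V), L.Nodup →
    Walk (G.residual f) a b L → (∀ e ∈ L, f e ≤ 1) → ∀ v,
    exc G (tog f L) v = exc G f v +
      ((if b = v then (1 : ℤ) else 0) - (if a = v then (1 : ℤ) else 0))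
  | [], f, a, _, hW, _, v => by
    have : a = b := hW
    subst this; simp [tog_nil]
  | e :: L, f, a, hN, hW, hle, v => by
    obtain ⟨hs, hW'⟩ := hW
    have heL : e ∉ L := (List.nodup_cons.mp hN).1
    rw [tog_cons heL]
    set f' := Function.update f e (1 - f e) with hf'
    have hW'' : Walk (G.residual f') ((G.residual f).tgt e) b L := by
      refine walk_congr (fun e' he' => ?_) hW'
      have : e' ≠ e := fun h => heL (h ▸ he')
      simp [residual, hf', Function.update_of_ne this]
    have hle' : ∀ e' ∈ L, f' e' ≤ 1 := fun e' he' => by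
      rw [hf', Function.update_of_ne (fun h => heL (by rwa [h] at he'))]; exact hle e' (by simp [he'])
    have ih := exc_tog L f' ((G.residual f).tgt e) (List.nodup_cons.mp hN).2 hW'' hle' v
    rw [ih, hf', exc_toggle f e (hle e (by simp)) v, ← hs]
    ring

lemma exc_residual (f g : E → ℕ) (hf : ∀ e, f e ≤ 1) (hg : ∀ e, g e ≤ 1) (v : V) :
    exc (G.residual f) (fun e => if f e = 1 then 1 - g e else g e) v =
      exc G g v - exc G f v := by
  rw [exc_eq_sum, exc_eq_sum, exc_eq_sum, ← Finset.sum_sub_distrib]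
  apply Finset.sum_congr rfl
  intro e _
  rcases Nat.le_one_iff_eq_zero_or_eq_one.mp (hf e) with h | h <;>
    rcases Nat.le_one_iff_eq_zero_or_eq_one.mp (hg e) with h' | h' <;>
    by_cases h1 : G.tgt e = v <;> by_cases h2 : G.src e = v <;>
    simp [residual, h, h', h1, h2]

lemma exc_residual_self (f : E → ℕ) (hf : ∀ e, f e ≤ 1) (v : V) :
    exc (G.residual f) f v = - exc G f v := by
  have h := exc_residual (G := G) f (fun _ => 0) hf (fun _ => Nat.zero_le 1) v
  have h0 : exc G (fun _ => (0 : ℕ)) v = 0 := by simp [exc]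
  have hfun : (fun e => if f e = 1 then 1 - (0:ℕ) else (0:ℕ)) = f := by
    funext e
    rcases Nat.le_one_iff_eq_zero_or_eq_one.mp (hf e) with h | h <;> simp [h]
  rw [hfun, h0] at h
  linarith

lemma sum_exc_R {s t : V} {h : E → ℕ} (hc : G.Conserves s t h) (hst : s ≠ t) (R : Finset V) :
    ∑ v ∈ R, exc G h v =
      (if s ∈ R then exc G h s else 0) + (if t ∈ R then exc G h t else 0) := by
  have hcongr : ∀ v ∈ R, exc G h v =
      (if s = v then exc G h s else 0) + (if t = v then exc G h t else 0) := by
    intro v _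
    by_cases h1 : v = s
    · subst h1; simp [Ne.symm hst]
    · by_cases h2 : v = t
      · subst h2; simp [hst]
      · rw [(conserves_iff_exc G s t h).mp hc v h1 h2]
        simp [Ne.symm h1, Ne.symm h2]
  rw [Finset.sum_congr rfl hcongr, Finset.sum_add_distrib,
    Finset.sum_ite_eq, Finset.sum_ite_eq]

lemma sum_ind (R : Finset V) (b : V) :
    ∑ v ∈ R, (if b = v then (1 : ℤ) else 0) = if b ∈ R then 1 else 0 :=
  Finset.sum_ite_eq R b (fun _ => (1 : ℤ))

lemma reach_mono {H : Digraph' V E} {h : E → ℕ} {F : Finset E} (hF : ∀ e, h e ≠ 0 → e ∉ F)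
    {a b : V} (hr : Relation.ReflTransGen (hstep H h) a b) : H.ReachAvoid F a b :=
  Relation.ReflTransGen.mono (p := H.stepAvoid F)
    (by rintro u v ⟨e, he, hs, ht⟩; exact ⟨e, hF e he, hs, ht⟩) a b hr

lemma maxflow_unique {G : Digraph' V E} {s t : V} {F : Finset E} {m m' : ℤ}
    (h1 : G.IsMaxFlowValue s t F m) (h2 : G.IsMaxFlowValue s t F m') : m = m' := by
  obtain ⟨⟨g, hg, hvan, hv⟩, hub⟩ := h1
  obtain ⟨⟨g', hg', hvan', hv'⟩, hub'⟩ := h2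
  have := hub' g hg hvan
  have := hub g' hg' hvan'
  omega

lemma hsrc_res {f : E → ℕ} {e : E} (h : f e = 1) :
    (G.residual f).src e = G.tgt e ∧ (G.residual f).tgt e = G.src e := by
  constructor <;> simp [residual, h]

lemma lemA (G : Digraph' V E) (s t : V) (lam : ℕ) (hmax : G.IsMaxFlowValue s t ∅ lam)
    (e₁ e₂ : E) (f : E → ℕ) (hf : G.IsFlow s t f) (hval : G.flowValue s f = lam)
    (hf1 : f e₁ = 0) (hf2 : f e₂ = 1)
    (hsc : (G.residual f).ReachAvoid {e₁} (G.src e₂) (G.tgt e₂)) :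
    G.IsMaxFlowValue s t {e₁, e₂} lam := by
  obtain ⟨hsrc2, htgt2⟩ := hsrc_res (G := G) hf2
  have hne12 : e₁ ≠ e₂ := fun h => by rw [h, hf2] at hf1; exact one_ne_zero hf1
  constructor
  swap
  · intro g hg _; exact hmax.2 g hg (by simp)
  obtain ⟨L, hWL, hPL⟩ := exists_walk (P := fun e => e ∉ ({e₁} : Finset E))
    (fun u v h => h) hsc
  obtain ⟨T, hTN, hTW, hTsub⟩ := exists_trail hWL
  have key : ∃ T' : List E, T'.Nodup ∧ Walk (G.residual f) (G.src e₂) (G.tgt e₂) T' ∧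
      e₂ ∉ T' ∧ ∀ e ∈ T', e ∈ L := by
    rcases trail_split (G.residual f) e₂ hTN hTW with ⟨T', hN, hW, hni, hsub⟩ |
      ⟨T', hN, hW, hni, hsub⟩
    · exact ⟨T', hN, hW, hni, fun e he => hTsub e (hsub e he)⟩
    · rw [hsrc2] at hW
      exact ⟨T', hN, hW, hni, fun e he => hTsub e (hsub e he)⟩
  obtain ⟨T', hN, hW, hni, hsub⟩ := key
  set g := tog f (e₂ :: T') with hg
  have hN2 : (e₂ :: T').Nodup := List.nodup_cons.mpr ⟨hni, hN⟩
  have hW2 : Walk (G.residual f) (G.tgt e₂) (G.tgt e₂) (e₂ :: T') := by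
    exact ⟨hsrc2, by rw [htgt2]; exact hW⟩
  have hexc : ∀ v, exc G g v = exc G f v := by
    intro v
    rw [hg, exc_tog (e₂ :: T') f (G.tgt e₂) hN2 hW2 (fun e _ => hf.1 e) v]
    ring
  have hflow : G.IsFlow s t g := by
    refine ⟨tog_le_one hf.1 _, ?_⟩
    rw [conserves_iff_exc]
    intro v hvs hvt
    rw [hexc v]
    exact (conserves_iff_exc G s t f).mp hf.2 v hvs hvt
  refine ⟨g, hflow, ?_, ?_⟩
  · intro e he
    have h1 : g e₁ = 0 := by
      have : e₁ ∉ e₂ :: T' := by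
        intro hmem
        rcases List.mem_cons.mp hmem with h | h
        · exact hne12 h
        · exact (hPL e₁ (hsub e₁ h)) (by simp)
      rw [hg, tog_of_not_mem this, hf1]
    have h2 : g e₂ = 0 := by
      rw [hg, tog_of_mem (by simp), hf2]
    rcases Finset.mem_insert.mp he with h | h
    · rw [h]; exact h1
    · rw [Finset.mem_singleton.mp h]; exact h2
  · rw [flowValue_eq, hexc s, ← flowValue_eq, hval]

lemma lemBmax (G : Digraph' V E) (s t : V) (hst : s ≠ t) (lam : ℕ)
    (hmax : G.IsMaxFlowValue s t ∅ lam)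
    (e₁ e₂ : E) (f : E → ℕ) (hf : G.IsFlow s t f) (hval : G.flowValue s f = lam)
    (hf1 : f e₁ = 0) (hf2 : f e₂ = 1)
    (hns : ¬ (G.residual f).ReachAvoid {e₁} (G.src e₂) (G.tgt e₂))
    (g : E → ℕ) (hg : G.IsFlow s t g) (hg1 : g e₁ = 0) (hg2 : g e₂ = 0) :
    G.flowValue s g ≤ (lam : ℤ) - 1 := by
  obtain ⟨hsrc2, htgt2⟩ := hsrc_res (G := G) hf2
  have hle : G.flowValue s g ≤ (lam : ℤ) := hmax.2 g hg (by simp)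
  have hne : G.flowValue s g ≠ (lam : ℤ) := by
    intro heq
    set h : E → ℕ := fun e => if f e = 1 then 1 - g e else g e with hh
    have hgf : ∀ v, exc G g v = exc G f v := by
      intro v
      by_cases h1 : v = s
      · rw [h1]
        have := flowValue_eq G s g
        have := flowValue_eq G s f
        omega
      · by_cases h2 : v = t
        · rw [h2, exc_t_eq hg.2 hst, exc_t_eq hf.2 hst]
          have := flowValue_eq G s g
          have := flowValue_eq G s f
          omega
        · rw [(conserves_iff_exc G s t g).mp hg.2 v h1 h2,
            (conserves_iff_exc G s t f).mp hf.2 v h1 h2]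
    have hexc0 : ∀ v, exc (G.residual f) h v = 0 := by
      intro v
      rw [hh, exc_residual f g hf.1 hg.1 v, hgf v]
      ring
    obtain ⟨R, hxR, hreach, hcut⟩ := key (G.residual f) h (G.src e₂)
    have hcut0 : ∑ e ∈ univ.filter
        (fun e => (G.residual f).tgt e ∈ R ∧ (G.residual f).src e ∉ R), (h e : ℤ) = 0 := by
      rw [← hcut]
      exact Finset.sum_eq_zero fun v _ => hexc0 v
    by_cases hmem : (G.residual f).src e₂ ∈ R
    · rw [hsrc2] at hmem
      refine hns (reach_mono ?_ (hreach _ hmem))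
      intro e he
      simp only [Finset.mem_singleton]
      intro hee
      subst hee
      apply he
      rw [hh]
      simp [hf1, hg1]
    · have hmem2 : e₂ ∈ univ.filter
          (fun e => (G.residual f).tgt e ∈ R ∧ (G.residual f).src e ∉ R) := by
        simp only [Finset.mem_filter, Finset.mem_univ, true_and]
        exact ⟨htgt2 ▸ hxR, hmem⟩
      have h2 : (h e₂ : ℤ) = 1 := by rw [hh]; simp [hf2, hg2]
      have hges := Finset.single_le_sum (f := fun e => (h e : ℤ))
        (fun e _ => by positivity) hmem2
      have h6 : (1 : ℤ) ≤ ∑ e ∈ univ.filter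
          (fun e => (G.residual f).tgt e ∈ R ∧ (G.residual f).src e ∉ R), (h e : ℤ) := by
        simpa [h2] using hges
      omega
  omega

lemma lemBex (G : Digraph' V E) (s t : V) (hst : s ≠ t) (lam : ℕ)
    (e₁ e₂ : E) (f : E → ℕ) (hf : G.IsFlow s t f) (hval : G.flowValue s f = lam)
    (hf1 : f e₁ = 0) (hf2 : f e₂ = 1)
    (hns : ¬ (G.residual f).ReachAvoid {e₁} (G.src e₂) (G.tgt e₂)) :
    ∃ g, G.IsFlow s t g ∧ g e₁ = 0 ∧ g e₂ = 0 ∧ G.flowValue s g = (lam : ℤ) - 1 := by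
  obtain ⟨hsrc2, htgt2⟩ := hsrc_res (G := G) hf2
  have hne12 : e₁ ≠ e₂ := fun h => by rw [h, hf2] at hf1; exact one_ne_zero hf1
  have hexs : exc G f s = -(lam : ℤ) := by have := flowValue_eq G s f; omega
  have hext : exc G f t = (lam : ℤ) := by rw [exc_t_eq hf.2 hst]; omega
  obtain ⟨R, hxR, hreach, hcut⟩ := key (G.residual f) f (G.src e₂)
  have hsum : ∑ v ∈ R, exc (G.residual f) f v = - ∑ v ∈ R, exc G f v := by
    rw [Finset.sum_congr rfl (fun v _ => exc_residual_self f hf.1 v)]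
    exact Finset.sum_neg_distrib _
  have hRs : ∑ v ∈ R, exc G f v =
      (if s ∈ R then -(lam : ℤ) else 0) + (if t ∈ R then (lam : ℤ) else 0) := by
    rw [sum_exc_R hf.2 hst R, hexs, hext]
  by_cases hmem : (G.residual f).src e₂ ∈ R
  · exfalso
    rw [hsrc2] at hmem
    refine hns (reach_mono ?_ (hreach _ hmem))
    intro e he
    simp only [Finset.mem_singleton]
    intro hee
    rw [hee, hf1] at he
    exact he rfl
  · have hmem2 : e₂ ∈ univ.filter
        (fun e => (G.residual f).tgt e ∈ R ∧ (G.residual f).src e ∉ R) := by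
      simp only [Finset.mem_filter, Finset.mem_univ, true_and]
      exact ⟨htgt2 ▸ hxR, hmem⟩
    have hge : (1 : ℤ) ≤ ∑ e ∈ univ.filter
        (fun e => (G.residual f).tgt e ∈ R ∧ (G.residual f).src e ∉ R), (f e : ℤ) := by
      simpa [hf2] using Finset.single_le_sum (f := fun e => (f e : ℤ))
        (fun e _ => by positivity) hmem2
    rw [hsum, hRs] at hcut
    have hsRmem : s ∈ R := by
      by_contra h1
      by_cases h2 : t ∈ R <;> simp [h1, h2] at hcut <;> omega
    have hlam1 : 1 ≤ lam := by
      by_cases h2 : t ∈ R <;> simp [hsRmem, h2] at hcut <;> omega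
    obtain ⟨L, hWL, hPL⟩ := exists_walk (P := fun e => f e ≠ 0)
      (fun u v h => h) (hreach s hsRmem)
    obtain ⟨T, hTN, hTW, hTsub⟩ := exists_trail hWL
    have key2 : ∃ T', T'.Nodup ∧ Walk (G.residual f) (G.src e₂) s T' ∧ e₂ ∉ T' ∧
        ∀ e ∈ T', f e ≠ 0 := by
      rcases trail_split (G.residual f) e₂ hTN hTW with ⟨T', hN, hW, hni, hsub⟩ |
        ⟨T', hN, hW, hni, hsub⟩
      · exact ⟨T', hN, hW, hni, fun e he => hPL e (hTsub e (hsub e he))⟩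
      · exfalso
        rw [hsrc2] at hW
        refine hns (reach_mono (h := f) ?_
          (reflTransGen_of_walk (r := hstep (G.residual f) f)
            (fun e hPe => ⟨e, hPe, rfl, rfl⟩) hW
            (fun e he => hPL e (hTsub e (hsub e he)))))
        intro e he
        simp only [Finset.mem_singleton]
        intro hee
        rw [hee, hf1] at he
        exact he rfl
    obtain ⟨L₂, hN₂, hW₂, hni₂, hlab₂⟩ := key2
    set f₂ := tog f (e₂ :: L₂) with hf₂
    have hN2' : (e₂ :: L₂).Nodup := List.nodup_cons.mpr ⟨hni₂, hN₂⟩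
    have hW2' : Walk (G.residual f) (G.tgt e₂) s (e₂ :: L₂) :=
      ⟨hsrc2, by rw [htgt2]; exact hW₂⟩
    have hexc2 : ∀ v, exc G f₂ v = exc G f v +
        ((if s = v then (1 : ℤ) else 0) - (if G.tgt e₂ = v then (1 : ℤ) else 0)) :=
      fun v => exc_tog (e₂ :: L₂) f (G.tgt e₂) hN2' hW2' (fun e _ => hf.1 e) v
    have hf₂le : ∀ e, f₂ e ≤ 1 := tog_le_one hf.1 _
    have hnotin₁ : e₁ ∉ e₂ :: L₂ := by
      intro hmem'
      rcases List.mem_cons.mp hmem' with h | h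
      · exact hne12 h
      · exact hlab₂ e₁ h hf1
    have hf₂e₁ : f₂ e₁ = 0 := by rw [hf₂, tog_of_not_mem hnotin₁, hf1]
    have hf₂e₂ : f₂ e₂ = 0 := by rw [hf₂, tog_of_mem (by simp), hf2]
    obtain ⟨R₂, htR₂, hreach₂, hcut₂⟩ := key (G.residual f₂) f₂ t
    have hsum₂ : ∑ v ∈ R₂, exc (G.residual f₂) f₂ v = - ∑ v ∈ R₂, exc G f₂ v := by
      rw [Finset.sum_congr rfl (fun v _ => exc_residual_self f₂ hf₂le v)]
      exact Finset.sum_neg_distrib _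
    have hR₂sum : ∑ v ∈ R₂, exc G f₂ v =
        ((if s ∈ R₂ then -(lam : ℤ) else 0) + (if t ∈ R₂ then (lam : ℤ) else 0)) +
          ((if s ∈ R₂ then (1 : ℤ) else 0) - (if G.tgt e₂ ∈ R₂ then (1 : ℤ) else 0)) := by
      rw [Finset.sum_congr rfl (fun v _ => hexc2 v), Finset.sum_add_distrib,
        Finset.sum_sub_distrib, sum_ind R₂ s, sum_ind R₂ (G.tgt e₂),
        sum_exc_R hf.2 hst R₂, hexs, hext]
    have hcutpos : 0 ≤ ∑ e ∈ univ.filter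
        (fun e => (G.residual f₂).tgt e ∈ R₂ ∧ (G.residual f₂).src e ∉ R₂), (f₂ e : ℤ) :=
      Finset.sum_nonneg (fun e _ => by positivity)
    rw [hsum₂, hR₂sum] at hcut₂
    have htgtR₂ : G.tgt e₂ ∈ R₂ := by
      by_cases h2 : G.tgt e₂ ∈ R₂
      · exact h2
      · exfalso
        by_cases h1 : s ∈ R₂ <;> simp [h1, h2, htR₂] at hcut₂ <;> omega
    obtain ⟨L₁, hWL₁, hPL₁⟩ := exists_walk (P := fun e => f₂ e ≠ 0)
      (fun u v h => h) (hreach₂ _ htgtR₂)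
    obtain ⟨T₁, hT₁N, hT₁W, hT₁sub⟩ := exists_trail hWL₁
    set f₃ := tog f₂ T₁ with hf₃
    have hexc3 : ∀ v, exc G f₃ v = exc G f₂ v +
        ((if G.tgt e₂ = v then (1 : ℤ) else 0) - (if t = v then (1 : ℤ) else 0)) :=
      fun v => exc_tog T₁ f₂ t hT₁N hT₁W (fun e _ => hf₂le e) v
    have hlab₁ : ∀ e ∈ T₁, f₂ e ≠ 0 := fun e he => hPL₁ e (hT₁sub e he)
    refine ⟨f₃, ⟨tog_le_one hf₂le _, ?_⟩, ?_, ?_, ?_⟩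
    · rw [conserves_iff_exc]
      intro v hvs hvt
      rw [hexc3 v, hexc2 v, (conserves_iff_exc G s t f).mp hf.2 v hvs hvt]
      by_cases h3 : G.tgt e₂ = v <;> simp [h3, Ne.symm hvs, Ne.symm hvt]
    · have : e₁ ∉ T₁ := fun hmem' => hlab₁ e₁ hmem' (by rw [hf₂e₁])
      rw [hf₃, tog_of_not_mem this, hf₂e₁]
    · have : e₂ ∉ T₁ := fun hmem' => hlab₁ e₂ hmem' (by rw [hf₂e₂])
      rw [hf₃, tog_of_not_mem this, hf₂e₂]
    · rw [flowValue_eq, hexc3 s, hexc2 s, hexs]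
      by_cases h3 : G.tgt e₂ = s <;> simp [h3, Ne.symm hst] <;> ring

end Digraph'

/-- Let `e₁, e₂ ∈ E` and let `f` be a maximum `(s,t)`-flow of `G`
with `f e₁ = 0` and `f e₂ = 1`. Then the maximum `(s,t)`-flow value of `G − {e₁,e₂}`
equals `λ − 1` iff the endpoints of `e₂` are not strongly connected in `G_f − e₁`;
otherwise it equals `λ`. -/
theorem stmt12 {V E : Type} [Fintype V] [DecidableEq V] [Fintype E] [DecidableEq E]
    (G : Digraph' V E) (s t : V) (hst : s ≠ t)
    (lam : ℕ) (hmax : G.IsMaxFlowValue s t ∅ lam)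
    (e₁ e₂ : E) (f : E → ℕ) (hf : G.IsFlow s t f) (hval : G.flowValue s f = lam)
    (hf1 : f e₁ = 0) (hf2 : f e₂ = 1) :
    (G.IsMaxFlowValue s t {e₁, e₂} ((lam : ℤ) - 1) ↔
      ¬ ((G.residual f).ReachAvoid {e₁} (G.src e₂) (G.tgt e₂) ∧
          (G.residual f).ReachAvoid {e₁} (G.tgt e₂) (G.src e₂))) ∧
    (((G.residual f).ReachAvoid {e₁} (G.src e₂) (G.tgt e₂) ∧
        (G.residual f).ReachAvoid {e₁} (G.tgt e₂) (G.src e₂)) →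
      G.IsMaxFlowValue s t {e₁, e₂} lam) := by
  obtain ⟨hsrc2, htgt2⟩ := Digraph'.hsrc_res (G := G) hf2
  have hne21 : e₂ ≠ e₁ := fun h => by rw [← h, hf2] at hf1; exact one_ne_zero hf1
  have hrev : (G.residual f).ReachAvoid {e₁} (G.tgt e₂) (G.src e₂) :=
    Relation.ReflTransGen.single ⟨e₂, by simp [hne21], hsrc2, htgt2⟩
  constructor
  · constructor
    · intro hmv hsc
      have h2 := Digraph'.lemA G s t lam hmax e₁ e₂ f hf hval hf1 hf2 hsc.1
      have := Digraph'.maxflow_unique hmv h2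
      omega
    · intro hnsc
      have hns : ¬ (G.residual f).ReachAvoid {e₁} (G.src e₂) (G.tgt e₂) :=
        fun h12 => hnsc ⟨h12, hrev⟩
      obtain ⟨g, hg, hg1, hg2, hgval⟩ :=
        Digraph'.lemBex G s t hst lam e₁ e₂ f hf hval hf1 hf2 hns
      refine ⟨⟨g, hg, ?_, hgval⟩, ?_⟩
      · intro e he
        rcases Finset.mem_insert.mp he with h | h
        · rw [h]; exact hg1
        · rw [Finset.mem_singleton.mp h]; exact hg2
      · intro g' hg' hvan
        exact Digraph'.lemBmax G s t hst lam hmax e₁ e₂ f hf hval hf1 hf2 hns g' hg'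
          (hvan e₁ (by simp)) (hvan e₂ (by simp))
  · intro hsc
    exact Digraph'.lemA G s t lam hmax e₁ e₂ f hf hval hf1 hf2 hsc.1
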